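/- arXiv:1705.07565 — 2 statements merged into one kernel-verified Lean document; each statement's English description precedes it below -/
import Mathlib

section
/- Consider a pruned feed-forward ReLU network with L layers defined recursively by Ỹ⁰ = X and Ỹˡ = σ(Ŵₗᵀ Ỹ^{l−1}), and the original outputs Yˡ of the unpruned reference. Suppose for each layer l the layer-wise error satisfies (1/√n)‖σ(Ŵₗᵀ Y^{l−1}) − Yˡ‖_F ≤ εˡ. Then the accumulated output error satisfies (1/√n)‖Ỹᴸ − Yᴸ‖_F ≤ Σ_{k=1}^{L−1} (∏_{l=k+1}^{L} ‖Ŵₗ‖_F) ε^k + ε^L. -/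
open Matrix

noncomputable def frob {m n : Type*} [Fintype m] [Fintype n] (A : Matrix m n ℝ) : ℝ :=
  Real.sqrt (∑ i, ∑ j, (A i j) ^ 2)

lemma frob_nonneg {m n : Type*} [Fintype m] [Fintype n] (A : Matrix m n ℝ) : 0 ≤ frob A :=
  Real.sqrt_nonneg _

lemma frob_eq_norm {m n : Type*} [Fintype m] [Fintype n] (A : Matrix m n ℝ) :
    frob A = ‖(WithLp.equiv 2 (m × n → ℝ)).symm (fun p => A p.1 p.2)‖ := by
  rw [EuclideanSpace.norm_eq, frob, Fintype.sum_prod_type]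
  simp [sq_abs]

lemma frob_triangle {m n : Type*} [Fintype m] [Fintype n] (A B : Matrix m n ℝ) :
    frob (A + B) ≤ frob A + frob B := by
  rw [frob_eq_norm, frob_eq_norm, frob_eq_norm]
  exact norm_add_le ((WithLp.equiv 2 (m × n → ℝ)).symm (fun p => A p.1 p.2))
    ((WithLp.equiv 2 (m × n → ℝ)).symm (fun p => B p.1 p.2))

lemma frob_sub_le {m n : Type*} [Fintype m] [Fintype n] (A B C : Matrix m n ℝ) :
    frob (A - B) ≤ frob (A - C) + frob (C - B) := by
  have h := frob_triangle (A - C) (C - B)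
  rwa [sub_add_sub_cancel] at h

lemma frob_relu_lip {m n : Type*} [Fintype m] [Fintype n] (A B : Matrix m n ℝ) :
    frob (A.map (fun x => max x 0) - B.map (fun x => max x 0)) ≤ frob (A - B) := by
  apply Real.sqrt_le_sqrt
  apply Finset.sum_le_sum; intro i _
  apply Finset.sum_le_sum; intro j _
  simp only [Matrix.sub_apply, Matrix.map_apply]
  rw [← sq_abs, ← sq_abs (A i j - B i j)]
  exact pow_le_pow_left₀ (abs_nonneg _) (abs_max_sub_max_le_abs _ _ _) 2

lemma frob_transpose_mul {m k n : Type*} [Fintype m] [Fintype k] [Fintype n]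
    (W : Matrix m k ℝ) (M : Matrix m n ℝ) :
    frob (Wᵀ * M) ≤ frob W * frob M := by
  have h1 : ∑ j, ∑ c, ((Wᵀ * M) j c) ^ 2 ≤ (∑ i, ∑ j, (W i j) ^ 2) * (∑ i, ∑ c, (M i c) ^ 2) := by
    have key : ∀ (j : k) (c : n), ((Wᵀ * M) j c) ^ 2 ≤ (∑ i, (W i j) ^ 2) * (∑ i, (M i c) ^ 2) := by
      intro j c
      simpa [Matrix.mul_apply, Matrix.transpose_apply] using
        Finset.sum_mul_sq_le_sq_mul_sq Finset.univ (fun i => W i j) (fun i => M i c)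
    calc ∑ j, ∑ c, ((Wᵀ * M) j c) ^ 2
        ≤ ∑ j, ∑ c, (∑ i, (W i j) ^ 2) * (∑ i, (M i c) ^ 2) := by
          apply Finset.sum_le_sum; intro j _; apply Finset.sum_le_sum; intro c _; exact key j c
      _ = (∑ j, ∑ i, (W i j) ^ 2) * (∑ c, ∑ i, (M i c) ^ 2) :=
          (Finset.sum_mul_sum Finset.univ Finset.univ
            (fun j => ∑ i, (W i j) ^ 2) (fun c => ∑ i, (M i c) ^ 2)).symm
      _ = (∑ i, ∑ j, (W i j) ^ 2) * (∑ i, ∑ c, (M i c) ^ 2) := by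
          rw [Finset.sum_comm (f := fun j i => (W i j) ^ 2)]
          rw [Finset.sum_comm (f := fun c i => (M i c) ^ 2)]
  calc frob (Wᵀ * M) ≤ Real.sqrt ((∑ i, ∑ j, (W i j) ^ 2) * (∑ i, ∑ c, (M i c) ^ 2)) :=
        Real.sqrt_le_sqrt h1
    _ = frob W * frob M := Real.sqrt_mul (by positivity) _

/-- The accumulated pruned outputs: `Ỹ⁰ = X = Y 0`, `Ỹˡ⁺¹ = σ(Ŵₗᵀ Ỹˡ)`. -/
noncomputable def prunedOutput (d : ℕ → ℕ) (n : ℕ)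
    (W : ∀ l : ℕ, Matrix (Fin (d l)) (Fin (d (l + 1))) ℝ)
    (X : Matrix (Fin (d 0)) (Fin n) ℝ) : (l : ℕ) → Matrix (Fin (d l)) (Fin n) ℝ
  | 0 => X
  | (l + 1) => ((W l)ᵀ * prunedOutput d n W X l).map (fun x => max x 0)

lemma accum_aux (d : ℕ → ℕ) (n : ℕ)
    (W : ∀ l : ℕ, Matrix (Fin (d l)) (Fin (d (l + 1))) ℝ)
    (Y : ∀ l : ℕ, Matrix (Fin (d l)) (Fin n) ℝ)
    (ε : ℕ → ℝ) : ∀ L : ℕ,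
    (∀ l < L, (1 / Real.sqrt n) *
        frob (((W l)ᵀ * Y l).map (fun x => max x 0) - Y (l + 1)) ≤ ε (l + 1)) →
    (1 / Real.sqrt n) * frob (prunedOutput d n W (Y 0) L - Y L) ≤
      ∑ k ∈ Finset.range L, (∏ l ∈ Finset.Ico (k + 1) L, frob (W l)) * ε (k + 1) := by
  intro L
  induction L with
  | zero =>
      intro _
      simp [prunedOutput, frob]
  | succ L ih =>
      intro hε
      have hc : (0:ℝ) ≤ 1 / Real.sqrt n := by positivity
      set c := 1 / Real.sqrt n with hcdef
      set P := prunedOutput d n W (Y 0) with hP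
      set C := ((W L)ᵀ * Y L).map (fun x => max x 0) with hC
      have hPL : P (L + 1) = ((W L)ᵀ * P L).map (fun x => max x 0) := rfl
      have tri : frob (P (L + 1) - Y (L + 1)) ≤
          frob (P (L + 1) - C) + frob (C - Y (L + 1)) := frob_sub_le _ _ _
      have lip : frob (P (L + 1) - C) ≤ frob ((W L)ᵀ * P L - (W L)ᵀ * Y L) := by
        rw [hPL]; exact frob_relu_lip _ _
      have sub : frob ((W L)ᵀ * P L - (W L)ᵀ * Y L) ≤ frob (W L) * frob (P L - Y L) := by
        rw [← Matrix.mul_sub]; exact frob_transpose_mul _ _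
      have step : c * frob (P (L + 1) - Y (L + 1)) ≤
          frob (W L) * (c * frob (P L - Y L)) + ε (L + 1) := by
        have h1 : c * frob (P (L + 1) - Y (L + 1)) ≤
            c * (frob (W L) * frob (P L - Y L)) + c * frob (C - Y (L + 1)) := by
          have := tri.trans (add_le_add_left (lip.trans sub) _)
          calc c * frob (P (L + 1) - Y (L + 1))
              ≤ c * (frob (W L) * frob (P L - Y L) + frob (C - Y (L + 1))) :=
                mul_le_mul_of_nonneg_left this hc
            _ = _ := by ring
        have h2 : c * frob (C - Y (L + 1)) ≤ ε (L + 1) := hε L (Nat.lt_succ_self L)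
        calc c * frob (P (L + 1) - Y (L + 1))
            ≤ c * (frob (W L) * frob (P L - Y L)) + c * frob (C - Y (L + 1)) := h1
          _ ≤ frob (W L) * (c * frob (P L - Y L)) + ε (L + 1) := by
              rw [show c * (frob (W L) * frob (P L - Y L)) =
                  frob (W L) * (c * frob (P L - Y L)) by ring]
              exact add_le_add_right h2 _
      have ihL := ih (fun l hl => hε l (hl.trans (Nat.lt_succ_self L)))
      have hWnn : (0:ℝ) ≤ frob (W L) := frob_nonneg _
      calc c * frob (P (L + 1) - Y (L + 1))
          ≤ frob (W L) * (c * frob (P L - Y L)) + ε (L + 1) := step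
        _ ≤ frob (W L) * (∑ k ∈ Finset.range L,
              (∏ l ∈ Finset.Ico (k + 1) L, frob (W l)) * ε (k + 1)) + ε (L + 1) :=
            add_le_add_left (mul_le_mul_of_nonneg_left ihL hWnn) _
        _ = ∑ k ∈ Finset.range (L + 1),
              (∏ l ∈ Finset.Ico (k + 1) (L + 1), frob (W l)) * ε (k + 1) := by
            rw [Finset.sum_range_succ, Finset.mul_sum]
            congr 1
            · apply Finset.sum_congr rfl
              intro k hk
              rw [Finset.prod_Ico_succ_top (Nat.succ_le_of_lt (Finset.mem_range.mp hk))]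
              ring
            · simp

theorem accumulated_pruning_error_bound (d : ℕ → ℕ) (n L : ℕ) (hn : 0 < n) (hL : 0 < L)
    (W : ∀ l : ℕ, Matrix (Fin (d l)) (Fin (d (l + 1))) ℝ)
    (Y : ∀ l : ℕ, Matrix (Fin (d l)) (Fin n) ℝ)
    (ε : ℕ → ℝ)
    (hε : ∀ l < L, (1 / Real.sqrt n) *
        frob (((W l)ᵀ * Y l).map (fun x => max x 0) - Y (l + 1)) ≤ ε (l + 1)) :
    (1 / Real.sqrt n) * frob (prunedOutput d n W (Y 0) L - Y L) ≤
      ∑ k ∈ Finset.range L, (∏ l ∈ Finset.Ico (k + 1) L, frob (W l)) * ε (k + 1) := by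
  exact accum_aux d n W Y ε L hε
end

section
/- Let H be symmetric positive definite of size m×m and consider for each index q the sensitivity L_q = θ_q² / (2 (H⁻¹)_{qq}) with given θ ∈ ℝ^m. If q* achieves the minimal sensitivity, then for every feasible perturbation δ with δ_{q*} = −θ_{q*}, the quadratic form satisfies (1/2) δᵀ H δ ≥ L_{q*}. -/
open Matrix

theorem minimal_sensitivity_lower_bound {m : ℕ} (H : Matrix (Fin m) (Fin m) ℝ)
    (hH : H.PosDef) (θ : Fin m → ℝ) (qstar : Fin m)
    (hmin : ∀ q : Fin m, (θ qstar) ^ 2 / (2 * H⁻¹ qstar qstar) ≤ (θ q) ^ 2 / (2 * H⁻¹ q q)) :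
    ∀ δ : Fin m → ℝ, δ qstar = -θ qstar →
      (θ qstar) ^ 2 / (2 * H⁻¹ qstar qstar) ≤ (1 / 2) * (δ ⬝ᵥ (H *ᵥ δ)) := by
  intro δ hδ
  have hdet : IsUnit H.det := isUnit_iff_ne_zero.mpr hH.det_pos.ne'
  have hHinv : H * H⁻¹ = 1 := Matrix.mul_nonsing_inv H hdet
  have hsym : Hᵀ = H := by
    have := hH.isHermitian.eq
    simpa [Matrix.conjTranspose_eq_transpose_of_trivial] using this
  set e : Fin m → ℝ := Pi.single qstar 1 with he
  set x : Fin m → ℝ := H⁻¹ *ᵥ e with hx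
  have hHx : H *ᵥ x = e := by
    rw [hx, Matrix.mulVec_mulVec, hHinv, Matrix.one_mulVec]
  -- c = x ⬝ᵥ H x = H⁻¹ qstar qstar
  have hc : x ⬝ᵥ (H *ᵥ x) = H⁻¹ qstar qstar := by
    rw [hHx, dotProduct_single, mul_one, hx, he, Matrix.mulVec_single]; simp
  -- cross terms
  have hb1 : x ⬝ᵥ (H *ᵥ δ) = δ qstar := by
    rw [Matrix.dotProduct_mulVec]
    have : x ᵥ* H = e := by
      rw [← hsym, Matrix.vecMul_transpose, hHx]
    rw [this, he, single_dotProduct, one_mul]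
  have hb2 : δ ⬝ᵥ (H *ᵥ x) = δ qstar := by
    rw [hHx, he, dotProduct_single, mul_one]
  -- quadratic nonnegativity
  set a : ℝ := δ ⬝ᵥ (H *ᵥ δ) with ha
  set c : ℝ := H⁻¹ qstar qstar with hcdef
  have hquad : ∀ t : ℝ, 0 ≤ a * (t * t) + (2 * δ qstar) * t + c := by
    intro t
    have h0 : 0 ≤ (x + t • δ) ⬝ᵥ (H *ᵥ (x + t • δ)) := by
      have := hH.posSemidef.dotProduct_mulVec_nonneg (x + t • δ)
      simpa using this
    have hexp : (x + t • δ) ⬝ᵥ (H *ᵥ (x + t • δ))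
        = a * (t * t) + (2 * δ qstar) * t + c := by
      rw [Matrix.mulVec_add, Matrix.mulVec_smul, dotProduct_add,
        add_dotProduct, add_dotProduct, dotProduct_smul,
        smul_dotProduct, smul_dotProduct, dotProduct_smul,
        hb1, hb2, hc, ← ha]
      simp [smul_eq_mul]
      ring
    rw [← hexp]
    exact h0
  have hdisc := discrim_le_zero hquad
  rw [discrim] at hdisc
  -- so (2 δ qstar)^2 ≤ 4 a c, i.e. (δ qstar)^2 ≤ a * c
  have hkey : (δ qstar) ^ 2 ≤ a * c := by nlinarith [hdisc]
  have hcpos : 0 < c := by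
    have hepos : e ≠ 0 := by
      intro h
      have := congrFun h qstar
      simp [he] at this
    have := hH.inv.dotProduct_mulVec_pos hepos
    have h2 : e ⬝ᵥ (H⁻¹ *ᵥ e) = c := by
      rw [he, single_dotProduct, one_mul, Matrix.mulVec_single]; simp [hcdef]
    simpa [h2] using this
  rw [div_le_iff₀ (by linarith : (0:ℝ) < 2 * c)]
  have hθ : (θ qstar) ^ 2 = (δ qstar) ^ 2 := by rw [hδ]; ring
  rw [hθ]
  nlinarith [hkey]
end
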